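/- If a sequence of finite graphs (G_j) has uniformly regular tails, then it is uniformly sampling regular. -/
import Mathlib


open Filter Finset
open scoped Classical ENNReal

/-- A finite graph on vertex set `Fin n`, possibly with loops, without multiple edges. -/
structure FinGraph where
  n : ℕ
  adj : Fin n → Fin n → Bool
  symm : ∀ i j, adj i j = adj j i

namespace FinGraph

/-- Number of vertices. -/
def v (G : FinGraph) : ℕ := G.n

/-- Number of non-loop edges. -/
def e (G : FinGraph) : ℕ :=
  ((univ : Finset (Fin G.n × Fin G.n)).filter
    (fun q => G.adj q.1 q.2 = true ∧ q.1 < q.2)).card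

/-- Number of loops. -/
def loops (G : FinGraph) : ℕ :=
  ((univ : Finset (Fin G.n)).filter (fun i => G.adj i i = true)).card

/-- Degree of a vertex (number of neighbours via non-loop edges). -/
def deg (G : FinGraph) (i : Fin G.n) : ℕ :=
  ((univ : Finset (Fin G.n)).filter (fun j => G.adj i j = true ∧ j ≠ i)).card

/-- A graph is loopless when no vertex is adjacent to itself. -/
def Loopless (G : FinGraph) : Prop := ∀ i, G.adj i i = false

/-- The induced subgraph on a set `S` of vertices. -/
def induce (G : FinGraph) (S : Finset (Fin G.n)) : FinGraph where
  n := S.card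
  adj i j := G.adj (S.orderIsoOfFin rfl i).1 (S.orderIsoOfFin rfl j).1
  symm i j := G.symm _ _

/-- The graph obtained by discarding all isolated vertices (vertices in no edge,
loop or non-loop). -/
def core (G : FinGraph) : FinGraph :=
  G.induce ((univ : Finset (Fin G.n)).filter (fun i => ∃ j, G.adj i j = true))

/-- Graph isomorphism. -/
def Iso (G H : FinGraph) : Prop :=
  ∃ eqv : Fin G.n ≃ Fin H.n, ∀ i j, G.adj i j = H.adj (eqv i) (eqv j)

/-- Average degree `d̄(G)`. -/
noncomputable def avgDeg (G : FinGraph) : ℝ :=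
  (1 / (G.n : ℝ)) * ∑ i : Fin G.n, (G.deg i : ℝ)

/-- Square average degree `d²̄(G)`. -/
noncomputable def sqAvgDeg (G : FinGraph) : ℝ :=
  (1 / (G.n : ℝ)) * ∑ i : Fin G.n, (G.deg i : ℝ) ^ 2

/-- Edge density `ρ(G) = 2e(G)/v(G)²`. -/
noncomputable def density (G : FinGraph) : ℝ :=
  2 * (G.e : ℝ) / (G.n : ℝ) ^ 2

end FinGraph

/-- Unlabeled finite graphs: isomorphism classes of finite graphs. -/
def UGraph := Quot FinGraph.Iso

/-- The isomorphism class of a finite graph. -/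
def FinGraph.cls (G : FinGraph) : UGraph := Quot.mk _ G

/-- Probability that independent Bernoulli(min p 1) vertex selection picks exactly `S`. -/
noncomputable def sampleWeight (G : FinGraph) (p : ℝ) (S : Finset (Fin G.n)) : ℝ :=
  (min p 1) ^ S.card * (1 - min p 1) ^ (G.n - S.card)

/-- Law (pmf) of the `p`-sampling `S_p(G)`: keep each vertex independently with
probability `min p 1`, take the induced subgraph, discard isolated vertices,
and pass to the isomorphism class. -/
noncomputable def pSampleLaw (G : FinGraph) (p : ℝ) : UGraph → ℝ := fun H =>
  ∑ S ∈ (univ : Finset (Fin G.n)).powerset,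
    sampleWeight G p S * (if ((G.induce S).core).cls = H then 1 else 0)

/-- The graph on `Fin k` pulled back along a vertex sample `x`. -/
def seqGraph (G : FinGraph) (k : ℕ) (x : Fin k → Fin G.n) : FinGraph where
  n := k
  adj i j := G.adj (x i) (x j)
  symm i j := G.symm _ _

/-- Law (pmf) of the with-replacement `p`-sampling `S̃_p(G)`: draw `K ~ Poisson(p·v(G))`
vertices uniformly with replacement, form the graph on `Fin K` in which `i, j` are joined
whenever `(x_i, x_j)` is an edge of `G`, discard isolated vertices, and pass to the
isomorphism class. -/
noncomputable def wrSampleLaw (G : FinGraph) (p : ℝ) : UGraph → ℝ := fun H =>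
  ∑' k : ℕ,
    (Real.exp (-(p * (G.v : ℝ))) * (p * (G.v : ℝ)) ^ k / (Nat.factorial k : ℝ)) *
      ((((univ : Finset (Fin k → Fin G.n)).filter
          (fun x => ((seqGraph G k x).core).cls = H)).card : ℝ) / ((G.v : ℝ)) ^ k)

/-- Total variation distance `sup_A |P(A) − Q(A)|` between two pmf-style laws on a
countable discrete space. -/
noncomputable def dTV {α : Type*} (f g : α → ℝ) : ℝ :=
  ⨆ A : Set α, |∑' x : A, (f x.1 - g x.1)|

/-- `∑_i d_i · 1[d_i > k·√(e(G))]`, the total degree of vertices of degree exceeding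
`k·√(e(G))`. -/
noncomputable def tailDegSum (G : FinGraph) (k : ℝ) : ℝ :=
  ∑ i : Fin G.n,
    (if k * Real.sqrt (G.e : ℝ) < (G.deg i : ℝ) then (G.deg i : ℝ) else 0)

/-- A sequence of graphs is uniformly sampling regular. -/
def UniformlySamplingRegular (G : ℕ → FinGraph) : Prop :=
  ∀ ε : ℝ, 0 < ε → ∃ k : ℝ, 0 < k ∧ ∀ j,
    (1 / ((G j).e : ℝ)) * tailDegSum (G j) k < ε

/-- `E[e(S_p(G)) · 1[e(S_p(G)) > M]]`, the tail expectation of the number of non-loop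
edges of the `p`-sampled subgraph (discarding isolated vertices does not change it). -/
noncomputable def expEdgeTail (G : FinGraph) (p M : ℝ) : ℝ :=
  ∑ S ∈ (univ : Finset (Fin G.n)).powerset,
    sampleWeight G p S *
      (if M < ((G.induce S).e : ℝ) then ((G.induce S).e : ℝ) else 0)

/-- `E[e(S_p(G))]`, the expected number of non-loop edges of the `p`-sampled subgraph. -/
noncomputable def expEdge (G : FinGraph) (p : ℝ) : ℝ :=
  ∑ S ∈ (univ : Finset (Fin G.n)).powerset,
    sampleWeight G p S * ((G.induce S).e : ℝ)

/-- Law (pmf on ℕ) of the number of non-loop edges of the `p`-sampled subgraph. -/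
noncomputable def edgeLaw (G : FinGraph) (p : ℝ) (m : ℕ) : ℝ :=
  ∑ S ∈ (univ : Finset (Fin G.n)).powerset,
    sampleWeight G p S * (if (G.induce S).e = m then 1 else 0)

/-- Number of kept neighbours (via non-loop edges) of vertex `i` under the selection `S`. -/
def keptNbrCount (G : FinGraph) (S : Finset (Fin G.n)) (i : Fin G.n) : ℕ :=
  ((univ : Finset (Fin G.n)).filter (fun j => G.adj i j = true ∧ j ≠ i ∧ j ∈ S)).card

/-- `Pr(D_i ≥ 2)`: the probability that vertex `i` is kept and has at least two kept
neighbours, under independent Bernoulli(min p 1) vertex selection. -/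
noncomputable def probD2 (G : FinGraph) (p : ℝ) (i : Fin G.n) : ℝ :=
  ∑ S ∈ (univ : Finset (Fin G.n)).powerset,
    sampleWeight G p S * (if i ∈ S ∧ 2 ≤ keptNbrCount G S i then 1 else 0)

/-- Probability that some kept vertex has at least two kept neighbours. -/
noncomputable def probSomeD2 (G : FinGraph) (p : ℝ) : ℝ :=
  ∑ S ∈ (univ : Finset (Fin G.n)).powerset,
    sampleWeight G p S * (if ∃ i ∈ S, 2 ≤ keptNbrCount G S i then 1 else 0)

/-- Number of isolated kept (non-loop) edges: both endpoints kept, and each endpoint has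
exactly one kept neighbour. -/
def isoEdgeCount (G : FinGraph) (S : Finset (Fin G.n)) : ℕ :=
  ((univ : Finset (Fin G.n × Fin G.n)).filter (fun q =>
    G.adj q.1 q.2 = true ∧ q.1 < q.2 ∧ q.1 ∈ S ∧ q.2 ∈ S ∧
    keptNbrCount G S q.1 = 1 ∧ keptNbrCount G S q.2 = 1)).card

/-- A sequence of graphs has uniformly regular tails: for every `ε > 0` there is `M` such
that, ordering the vertices of each `G j` by decreasing degree, the total degree of all
but the `M√(e(G j))` highest-degree vertices is at most `ε · 2e(G j)`. -/
def UniformlyRegularTails (G : ℕ → FinGraph) : Prop :=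
  ∀ ε : ℝ, 0 < ε → ∃ M : ℝ, 0 < M ∧ ∀ j, ∀ σ : Fin (G j).n ≃ Fin (G j).n,
    (Antitone fun i => (G j).deg (σ i)) →
    (1 / (2 * ((G j).e : ℝ))) *
        ∑ i ∈ (univ : Finset (Fin (G j).n)).filter
            (fun i => M * Real.sqrt ((G j).e : ℝ) < (i.1 : ℝ) + 1),
          ((G j).deg (σ i) : ℝ) ≤ ε

/-- If a sequence of finite graphs has uniformly regular tails, then it
is uniformly sampling regular. -/

lemma card_le_of_indexBound {n : ℕ} (A : Finset (Fin n)) (c : ℝ) (hc : 0 ≤ c)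
    (hA : ∀ i ∈ A, ((i : ℕ) : ℝ) + 1 ≤ c) : (A.card : ℝ) ≤ c := by
  have h1 : A.card ≤ ⌊c⌋₊ := by
    have hsub : A.image Fin.val ⊆ Finset.range ⌊c⌋₊ := by
      intro m hm
      simp only [Finset.mem_image] at hm
      obtain ⟨i, hi, rfl⟩ := hm
      have h2 : ((i : ℕ) + 1 : ℕ) ≤ ⌊c⌋₊ := Nat.le_floor (by push_cast; exact hA i hi)
      exact Finset.mem_range.mpr h2
    calc A.card = (A.image Fin.val).card :=
          (Finset.card_image_of_injective _ Fin.val_injective).symm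
      _ ≤ (Finset.range ⌊c⌋₊).card := Finset.card_le_card hsub
      _ = ⌊c⌋₊ := Finset.card_range _
  calc (A.card : ℝ) ≤ (⌊c⌋₊ : ℝ) := by exact_mod_cast h1
    _ ≤ c := Nat.floor_le hc

lemma doubleCount (G : FinGraph) (A B : Finset (Fin G.n)) :
    ∑ v ∈ A, ((univ : Finset (Fin G.n)).filter
        (fun w => G.adj v w = true ∧ w ≠ v ∧ w ∈ B)).card
      ≤ ∑ w ∈ B, G.deg w := by
  have hL : ∀ v, ((univ : Finset (Fin G.n)).filter
      (fun w => G.adj v w = true ∧ w ≠ v ∧ w ∈ B)).card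
      = ∑ w ∈ univ, (if G.adj v w = true ∧ w ≠ v ∧ w ∈ B then 1 else 0) := by
    intro v; rw [Finset.card_filter]
  simp only [hL]
  rw [Finset.sum_comm]
  have hR : ∀ w, ∑ v ∈ A, (if G.adj v w = true ∧ w ≠ v ∧ w ∈ B then 1 else 0)
      ≤ if w ∈ B then G.deg w else 0 := by
    intro w
    by_cases hw : w ∈ B
    · rw [if_pos hw]
      have : ∑ v ∈ A, (if G.adj v w = true ∧ w ≠ v ∧ w ∈ B then 1 else 0)
          = (A.filter (fun v => G.adj v w = true ∧ w ≠ v ∧ w ∈ B)).card := by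
        rw [Finset.card_filter]
      rw [this, FinGraph.deg]
      apply Finset.card_le_card
      intro v hv
      simp only [Finset.mem_filter] at hv ⊢
      obtain ⟨_, hadj, hne, _⟩ := hv
      refine ⟨Finset.mem_univ _, ?_, ?_⟩
      · rw [← G.symm]; exact hadj
      · exact fun hvw => hne hvw.symm
    · simp [hw]
  calc ∑ w ∈ univ, ∑ v ∈ A, (if G.adj v w = true ∧ w ≠ v ∧ w ∈ B then 1 else 0)
      ≤ ∑ w ∈ univ, (if w ∈ B then G.deg w else 0) := Finset.sum_le_sum fun w _ => hR w
    _ = ∑ w ∈ B, G.deg w := by rw [← Finset.sum_filter, Finset.filter_mem_eq_inter,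
          Finset.univ_inter]

set_option maxHeartbeats 1000000 in
theorem stmt3 (G : ℕ → FinGraph) (h : UniformlyRegularTails G) :
    UniformlySamplingRegular G := by
  intro ε hε
  obtain ⟨M, hM, hURT⟩ := h (ε/8) (by linarith)
  refine ⟨max (2*M) 1, lt_of_lt_of_le one_pos (le_max_right _ _), fun j => ?_⟩
  set k : ℝ := max (2*M) 1 with hkdef
  by_cases hE0 : (G j).e = 0
  · simp only [hE0, Nat.cast_zero, div_zero, zero_mul]
    exact hε
  have hEpos : (0:ℝ) < ((G j).e : ℝ) := by exact_mod_cast Nat.pos_of_ne_zero hE0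
  set E : ℝ := ((G j).e : ℝ) with hEdef
  set s : ℝ := Real.sqrt E with hsdef
  have hs : 0 < s := Real.sqrt_pos.mpr hEpos
  -- sorting permutation
  set f : Fin (G j).n → ℤ := fun i => -((G j).deg i : ℤ) with hfdef
  set τ : Equiv.Perm (Fin (G j).n) := Tuple.sort f with hτdef
  have hanti : Antitone fun i => (G j).deg (τ i) := by
    intro a b hab
    have hm := Tuple.monotone_sort f hab
    simp only [Function.comp_apply, hfdef] at hm
    have : ((G j).deg (τ b) : ℤ) ≤ ((G j).deg (τ a) : ℤ) := by
      exact neg_le_neg_iff.mp hm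
    exact_mod_cast this
  have hb := hURT j τ hanti
  set R : Finset (Fin (G j).n) :=
    (univ : Finset (Fin (G j).n)).filter (fun i => M * s < (i.1 : ℝ) + 1) with hRdef
  set SB : ℝ := ∑ i ∈ R, (((G j).deg (τ i) : ℝ)) with hSBdef
  have h2E : (0:ℝ) < 2 * E := by linarith
  have hSB : SB ≤ ε/4 * E := by
    have h3 : SB / (2*E) ≤ ε/8 := by
      have : (1 / (2*E)) * SB = SB / (2*E) := by ring
      rw [← this]; exact hb
    have h4 : SB ≤ ε/8 * (2*E) := (div_le_iff₀ h2E).mp h3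
    nlinarith
  set B : Finset (Fin (G j).n) := R.image τ with hBdef
  have hSB' : ∑ w ∈ B, ((G j).deg w : ℝ) = SB := by
    rw [hBdef, Finset.sum_image (fun a _ b _ hab => τ.injective hab)]
  have hSBnn : 0 ≤ SB := by
    rw [hSBdef]; exact Finset.sum_nonneg fun i _ => by positivity
  -- bound on complement of B
  have hBc : (((univ : Finset (Fin (G j).n)) \ B).card : ℝ) ≤ M * s := by
    have hcB : B.card = R.card := Finset.card_image_of_injective _ τ.injective
    have hcc : ((univ : Finset (Fin (G j).n)) \ B).card
        = ((univ : Finset (Fin (G j).n)) \ R).card := by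
      rw [Finset.card_sdiff_of_subset (Finset.subset_univ _),
          Finset.card_sdiff_of_subset (Finset.subset_univ _), hcB]
    rw [hcc]
    have hsd : (univ : Finset (Fin (G j).n)) \ R
        = (univ : Finset (Fin (G j).n)).filter (fun i => ¬ (M * s < (i.1 : ℝ) + 1)) := by
      rw [hRdef, ← Finset.filter_not]
    rw [hsd]
    apply card_le_of_indexBound _ _ (by positivity)
    intro i hi
    simp only [Finset.mem_filter, not_lt] at hi
    exact hi.2
  set T : Finset (Fin (G j).n) :=
    (univ : Finset (Fin (G j).n)).filter (fun v => k * s < ((G j).deg v : ℝ)) with hTdef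
  have htds : tailDegSum (G j) k = ∑ v ∈ T, ((G j).deg v : ℝ) := by
    rw [tailDegSum, hTdef, Finset.sum_filter]
  set A : Finset (Fin (G j).n) := T \ B with hAdef
  set HA : ℝ := ∑ v ∈ A, ((G j).deg v : ℝ) with hHAdef
  have hsplit : ∑ v ∈ T, ((G j).deg v : ℝ) ≤ HA + SB := by
    have hTsub : T ⊆ A ∪ B := by
      intro v hv
      by_cases hvB : v ∈ B
      · exact Finset.mem_union_right _ hvB
      · exact Finset.mem_union_left _ (Finset.mem_sdiff.mpr ⟨hv, hvB⟩)
    calc ∑ v ∈ T, ((G j).deg v : ℝ) ≤ ∑ v ∈ A ∪ B, ((G j).deg v : ℝ) :=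
          Finset.sum_le_sum_of_subset_of_nonneg hTsub (fun v _ _ => by positivity)
      _ = HA + SB := by
          rw [Finset.sum_union Finset.sdiff_disjoint, hSB', hHAdef]
  -- lower bound on HA via card
  have hcardA : (A.card : ℝ) * (k * s) ≤ HA := by
    rw [hHAdef]
    have : ∀ v ∈ A, k * s ≤ ((G j).deg v : ℝ) := by
      intro v hv
      have hvT : v ∈ T := (Finset.mem_sdiff.mp hv).1
      rw [hTdef] at hvT
      exact le_of_lt (Finset.mem_filter.mp hvT).2
    calc (A.card : ℝ) * (k * s) = A.card • (k * s) := by rw [nsmul_eq_mul]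
      _ ≤ ∑ v ∈ A, ((G j).deg v : ℝ) := Finset.card_nsmul_le_sum A _ _ this
  -- upper bound on HA via double counting
  have hHA1 : HA ≤ SB + (A.card : ℝ) * (M * s) := by
    have hdv : ∀ v, ((G j).deg v : ℝ)
        ≤ (((univ : Finset (Fin (G j).n)).filter
            (fun w => (G j).adj v w = true ∧ w ≠ v ∧ w ∈ B)).card : ℝ)
          + M * s := by
      intro v
      have hsub : (univ : Finset (Fin (G j).n)).filter
          (fun w => (G j).adj v w = true ∧ w ≠ v)
          ⊆ ((univ : Finset (Fin (G j).n)).filter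
              (fun w => (G j).adj v w = true ∧ w ≠ v ∧ w ∈ B))
            ∪ ((univ : Finset (Fin (G j).n)) \ B) := by
        intro w hw
        simp only [Finset.mem_filter] at hw
        by_cases hwB : w ∈ B
        · exact Finset.mem_union_left _
            (Finset.mem_filter.mpr ⟨Finset.mem_univ _, hw.2.1, hw.2.2, hwB⟩)
        · exact Finset.mem_union_right _ (Finset.mem_sdiff.mpr ⟨Finset.mem_univ _, hwB⟩)
      have hc : (G j).deg v
          ≤ ((univ : Finset (Fin (G j).n)).filter
              (fun w => (G j).adj v w = true ∧ w ≠ v ∧ w ∈ B)).card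
            + ((univ : Finset (Fin (G j).n)) \ B).card := by
        rw [FinGraph.deg]
        exact le_trans (Finset.card_le_card hsub) (Finset.card_union_le _ _)
      calc ((G j).deg v : ℝ)
          ≤ (((univ : Finset (Fin (G j).n)).filter
              (fun w => (G j).adj v w = true ∧ w ≠ v ∧ w ∈ B)).card : ℝ)
            + (((univ : Finset (Fin (G j).n)) \ B).card : ℝ) := by exact_mod_cast hc
        _ ≤ _ + M * s := by linarith [hBc]
    have hdc : (∑ v ∈ A, (((univ : Finset (Fin (G j).n)).filter
        (fun w => (G j).adj v w = true ∧ w ≠ v ∧ w ∈ B)).card : ℝ)) ≤ SB := by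
      rw [← hSB']
      have := doubleCount (G j) A B
      exact_mod_cast this
    calc HA ≤ ∑ v ∈ A, ((((univ : Finset (Fin (G j).n)).filter
            (fun w => (G j).adj v w = true ∧ w ≠ v ∧ w ∈ B)).card : ℝ) + M * s) := by
          rw [hHAdef]; exact Finset.sum_le_sum fun v _ => hdv v
      _ = (∑ v ∈ A, (((univ : Finset (Fin (G j).n)).filter
            (fun w => (G j).adj v w = true ∧ w ≠ v ∧ w ∈ B)).card : ℝ))
          + (A.card : ℝ) * (M * s) := by rw [Finset.sum_add_distrib,
            Finset.sum_const, nsmul_eq_mul]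
      _ ≤ SB + (A.card : ℝ) * (M * s) := by linarith [hdc]
  -- combine
  have hk2M : 2 * M ≤ k := le_max_left _ _
  have hCnn : (0:ℝ) ≤ (A.card : ℝ) := Nat.cast_nonneg _
  have hHA2 : HA ≤ ε/2 * E := by
    have hM2 : (A.card : ℝ) * (M * s) ≤ (A.card : ℝ) * (k * s) / 2 := by
      nlinarith [mul_nonneg (mul_nonneg hCnn hs.le) (by linarith : (0:ℝ) ≤ k - 2*M)]
    nlinarith
  have htotal : tailDegSum (G j) k ≤ 3/4 * ε * E := by
    rw [htds]; nlinarith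
  have htnn : 0 ≤ tailDegSum (G j) k := by
    rw [htds]; exact Finset.sum_nonneg fun v _ => by positivity
  have hfin : (1 / E) * tailDegSum (G j) k ≤ 3/4 * ε := by
    rw [div_mul_eq_mul_div, one_mul, div_le_iff₀ hEpos]
    nlinarith
  calc (1 / E) * tailDegSum (G j) k ≤ 3/4 * ε := hfin
    _ < ε := by linarith
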